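/- Fix d : ℕ, and work on ℝ^d (i.e. Fin d → ℝ) with Lebesgue measure. Let η : ℝ^d → ℂ be integrable with compact support and with total integral ∫ η = 1, and for t ≠ 0 set η_t(x) := |t|^(-d) • η(t⁻¹ • x). Then for every integrable f : ℝ^d → ℂ, the convolutions η_t ⋆ f converge to f in L¹ as t → 0: Tendsto (fun t => ∫ x, ‖(∫ y, η_t y * f (x - y)) - f x‖) (𝓝[≠] 0) (𝓝 0), where (η_t ⋆ f)(x) = ∫ y, η_t(y) * f(x - y) dy. That is, the scaled family {η_t} is an approximate identity for the convolution algebra L¹(ℝ^d). -/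

import Mathlib

open MeasureTheory Filter Topology
open scoped ENNReal
set_option maxHeartbeats 1000000

private lemma translate_L1_cont {d : ℕ} {f : (Fin d → ℝ) → ℂ} (hf : Integrable f) :
    Continuous (fun v : Fin d → ℝ => ∫ x, ‖f (x - v) - f x‖) := by
  haveI : Fact ((1:ℝ≥0∞) ≤ 1) := ⟨le_refl _⟩
  set μ : Measure (Fin d → ℝ) := volume
  set F : Lp ℂ 1 μ := (memLp_one_iff_integrable.2 hf).toLp f with hF
  have hFf : ⇑F =ᵐ[μ] f := MemLp.coeFn_toLp _
  set g : (Fin d → ℝ) → C((Fin d → ℝ), (Fin d → ℝ)) :=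
    fun v => ⟨fun x => x - v, by continuity⟩ with hg
  have hgm : ∀ v, MeasurePreserving (g v) μ μ := fun v =>
    measurePreserving_sub_right μ v
  have hgc : Continuous g := by
    apply ContinuousMap.continuous_of_continuous_uncurry
    exact (continuous_snd.sub continuous_fst)
  have hcont : Continuous fun v => Lp.compMeasurePreserving (g v) (hgm v) F :=
    Continuous.compMeasurePreservingLp continuous_const hgc hgm (by norm_num)
  have key : ∀ v, ∫ x, ‖f (x - v) - f x‖ ∂μ
      = ‖Lp.compMeasurePreserving (g v) (hgm v) F - F‖ := by
    intro v
    have h1 : ⇑(Lp.compMeasurePreserving (g v) (hgm v) F - F)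
        =ᵐ[μ] fun x => f (x - v) - f x := by
      filter_upwards [Lp.coeFn_sub (Lp.compMeasurePreserving (g v) (hgm v) F) F,
        Lp.coeFn_compMeasurePreserving F (hgm v),
        (hgm v).quasiMeasurePreserving.ae_eq_comp hFf, hFf] with x h1 h2 h3 h4
      rw [h1, Pi.sub_apply, h2, h3, h4]; rfl
    rw [Lp.norm_def, eLpNorm_congr_ae h1, eLpNorm_one_eq_lintegral_enorm]
    exact integral_norm_eq_lintegral_enorm ((hf.comp_sub_right v).sub hf).aestronglyMeasurable
  simp only [key]
  exact (hcont.sub continuous_const).norm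

/-- Scaled compactly supported kernels of unit mass form an approximate identity:
for integrable `η` with compact support and `∫ η = 1`, the convolutions
`η_t ⋆ f` converge to `f` in `L¹` as `t → 0`, where
`η_t x = |t|^(-d) • η (t⁻¹ • x)`. -/
theorem stmt_6 (d : ℕ) (η : (Fin d → ℝ) → ℂ)
    (hη_int : Integrable η) (hη_supp : HasCompactSupport η)
    (hη_one : (∫ x, η x) = 1) :
    ∀ f : (Fin d → ℝ) → ℂ, Integrable f →
      Tendsto (fun t : ℝ =>
          ∫ x, ‖(∫ y, (|t| ^ (-(d : ℤ))) • η (t⁻¹ • y) * f (x - y)) - f x‖)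
        (𝓝[≠] (0 : ℝ)) (𝓝 0) := by
  intro f hf
  have hfinrank : Module.finrank ℝ (Fin d → ℝ) = d := Module.finrank_fin_fun ℝ
  have hTcont : Continuous (fun v : Fin d → ℝ => ∫ x, ‖f (x - v) - f x‖) :=
    translate_L1_cont hf
  set T : (Fin d → ℝ) → ℝ := fun v => ∫ x, ‖f (x - v) - f x‖ with hT
  have hT0 : T 0 = 0 := by simp [hT]
  have hTnn : ∀ v, 0 ≤ T v := fun v => integral_nonneg fun x => norm_nonneg _
  have hTbdd : ∀ v, T v ≤ 2 * ∫ x, ‖f x‖ := by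
    intro v
    have h1 : T v ≤ ∫ x, (‖f (x - v)‖ + ‖f x‖) := by
      apply integral_mono ((hf.comp_sub_right v).sub hf).norm
        ((hf.comp_sub_right v).norm.add hf.norm)
      intro x
      exact norm_sub_le _ _
    have h2 : ∫ x, (‖f (x - v)‖ + ‖f x‖) = 2 * ∫ x, ‖f x‖ := by
      rw [integral_add (hf.comp_sub_right v).norm hf.norm,
        integral_sub_right_eq_self (fun x => ‖f x‖) v]
      ring
    linarith
  set G : ℝ → ℝ := fun t => ∫ y, ‖η y‖ * T (t • y) with hG
  have hGtend : Tendsto G (𝓝[≠] (0:ℝ)) (𝓝 0) := by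
    have : Tendsto G (𝓝 (0:ℝ)) (𝓝 0) := by
      have hmeas : ∀ᶠ t : ℝ in 𝓝 0, AEStronglyMeasurable
          (fun y : Fin d → ℝ => ‖η y‖ * T (t • y)) volume := by
        filter_upwards with t
        exact (hη_int.norm.aestronglyMeasurable.mul
          ((hTcont.comp (continuous_const_smul t)).aestronglyMeasurable))
      have hbd : ∀ᶠ t : ℝ in 𝓝 0, ∀ᵐ y : Fin d → ℝ,
          ‖‖η y‖ * T (t • y)‖ ≤ ‖η y‖ * (2 * ∫ x, ‖f x‖) := by
        filter_upwards with t
        filter_upwards with y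
        rw [Real.norm_of_nonneg (mul_nonneg (norm_nonneg _) (hTnn _))]
        exact mul_le_mul_of_nonneg_left (hTbdd _) (norm_nonneg _)
      have hbint : Integrable (fun y : Fin d → ℝ => ‖η y‖ * (2 * ∫ x, ‖f x‖)) :=
        hη_int.norm.mul_const _
      have hlim : ∀ᵐ y : Fin d → ℝ, Tendsto (fun t : ℝ => ‖η y‖ * T (t • y))
          (𝓝 0) (𝓝 ((fun _ : Fin d → ℝ => (0:ℝ)) y)) := by
        filter_upwards with y
        have h1 : Tendsto (fun t : ℝ => t • y) (𝓝 0) (𝓝 0) := by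
          have := (continuous_id.smul (continuous_const (y := y))).tendsto (0:ℝ)
          simpa using (tendsto_id.smul_const y : Tendsto (fun t : ℝ => t • y) (𝓝 0) (𝓝 ((0:ℝ) • y)))
        have h2 : Tendsto (fun t : ℝ => T (t • y)) (𝓝 0) (𝓝 0) := by
          have := (hTcont.tendsto 0).comp h1
          rwa [hT0] at this
        simpa using tendsto_const_nhds.mul h2
      have := tendsto_integral_filter_of_dominated_convergence
        (μ := (volume : Measure (Fin d → ℝ))) (l := 𝓝 (0:ℝ))
        (F := fun t y => ‖η y‖ * T (t • y)) (f := fun _ => (0:ℝ))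
        (fun y => ‖η y‖ * (2 * ∫ x, ‖f x‖)) hmeas hbd hbint hlim
      simpa [hG] using this
    exact this.mono_left nhdsWithin_le_nhds
  apply squeeze_zero'
  · filter_upwards with t
    exact integral_nonneg fun x => norm_nonneg _
  · filter_upwards [self_mem_nhdsWithin] with t ht
    have ht : t ≠ 0 := ht
    set c : ℝ := |t| ^ (-(d : ℤ)) with hc
    have hcpos : 0 < c := zpow_pos (abs_pos.2 ht) _
    have hcmul : c * |t ^ d| = 1 := by
      rw [abs_pow, hc, ← zpow_natCast |t| d, ← zpow_add₀ (abs_ne_zero.2 ht)]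
      simp
    set ηt : (Fin d → ℝ) → ℂ := fun y => c • η (t⁻¹ • y) with hηt
    have hηt_int : Integrable ηt := (hη_int.comp_smul (inv_ne_zero ht)).smul c
    have hηt_one : ∫ y, ηt y = 1 := by
      rw [hηt]
      simp only [integral_smul]
      rw [Measure.integral_comp_inv_smul volume η t, hfinrank, hη_one]
      simp only [smul_eq_mul, mul_one, smul_smul]
      rw [hcmul, one_smul]
    -- the integrand as a function on the product
    set L : ℂ →L[ℝ] ℂ →L[ℝ] ℂ := ContinuousLinearMap.mul ℝ ℂ with hL
    have hA : Integrable (fun p : (Fin d → ℝ) × (Fin d → ℝ) => ηt p.2 * f (p.1 - p.2))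
        ((volume : Measure (Fin d → ℝ)).prod volume) := by
      have := hηt_int.convolution_integrand L hf
      simpa [hL] using this
    have hB : Integrable (fun p : (Fin d → ℝ) × (Fin d → ℝ) => ηt p.2 * f p.1)
        ((volume : Measure (Fin d → ℝ)).prod volume) := by
      have := hf.mul_prod hηt_int
      simpa [mul_comm] using this
    have hP : Integrable (fun p : (Fin d → ℝ) × (Fin d → ℝ) => ηt p.2 * (f (p.1 - p.2) - f p.1))
        ((volume : Measure (Fin d → ℝ)).prod volume) := by
      have := hA.sub hB
      simpa [mul_sub, Pi.sub_def] using this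
    -- a.e. rewriting of the convolution difference
    have hae : ∀ᵐ x : Fin d → ℝ,
        (∫ y, ηt y * f (x - y)) - f x = ∫ y, ηt y * (f (x - y) - f x) := by
      have hconv := hηt_int.ae_convolution_exists (L := L) hf
      filter_upwards [hconv] with x hx
      have hx' : Integrable (fun y => ηt y * f (x - y)) := by
        simpa [hL, ConvolutionExistsAt] using hx
      rw [integral_congr_ae (Eventually.of_forall fun y => mul_sub (ηt y) _ _),
        integral_sub hx' (hηt_int.mul_const (f x)), integral_mul_const, hηt_one, one_mul]
    calc ∫ x, ‖(∫ y, c • η (t⁻¹ • y) * f (x - y)) - f x‖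
        = ∫ x, ‖∫ y, ηt y * (f (x - y) - f x)‖ := by
          apply integral_congr_ae
          filter_upwards [hae] with x hx
          rw [← hx]
      _ ≤ ∫ x, ∫ y, ‖ηt y * (f (x - y) - f x)‖ := by
          apply integral_mono_of_nonneg (Eventually.of_forall fun x => norm_nonneg _)
            hP.integral_norm_prod_left
          exact Eventually.of_forall fun x => norm_integral_le_integral_norm _
      _ = ∫ y, ∫ x, ‖ηt y * (f (x - y) - f x)‖ := integral_integral_swap hP.norm
      _ = ∫ y, ‖ηt y‖ * T y := by
          apply integral_congr_ae
          filter_upwards with y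
          simp only [norm_mul]
          rw [integral_const_mul]
      _ = G t := by
          have hnorm : ∀ y, ‖ηt y‖ = c * ‖η (t⁻¹ • y)‖ := by
            intro y
            rw [hηt, norm_smul, Real.norm_of_nonneg hcpos.le]
          have hsub : ∀ y : Fin d → ℝ, T (t • t⁻¹ • y) = T y := by
            intro y
            rw [smul_inv_smul₀ ht]
          have hcv := Measure.integral_comp_inv_smul volume
            (fun z : Fin d → ℝ => ‖η z‖ * T (t • z)) t
          rw [hfinrank] at hcv
          calc ∫ y, ‖ηt y‖ * T y
              = c * ∫ y, ‖η (t⁻¹ • y)‖ * T (t • t⁻¹ • y) := by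
                rw [← integral_const_mul]
                apply integral_congr_ae
                filter_upwards with y
                rw [hnorm, hsub]; ring
            _ = c * (|t ^ d| * G t) := by rw [hcv]; simp [hG, smul_eq_mul]
            _ = G t := by rw [← mul_assoc, hcmul, one_mul]
  · exact hGtend
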